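/- Let q be a prime, p a positive integer, and F = GF(q^p). Let k, u, w be nonnegative integers and let z_1, …, z_w ∈ F be points whose GF(q)-linear span has dimension ν, with ν ≤ u. Let M be any random variable taking values in F^k, let R be uniformly distributed on F^u, with M and R stochastically independent, and define E = (E_1,…,E_w) by E_i = ∑_{j=1}^{k} M_j z_i^{q^{j-1}} + ∑_{j=1}^{u} R_j z_i^{q^{k+j-1}}. Then H(E) = ν·p·log q. -/

import Mathlib

open scoped Classical

/-- Probability that the random variable `X` (on finite sample space `Ω` with
probability mass function `p`) takes the value `s`. -/
noncomputable def probOf {Ω S : Type*} [Fintype Ω] (p : Ω → ℝ) (X : Ω → S) (s : S) : ℝ :=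
  ∑ ω ∈ Finset.univ.filter (fun ω => X ω = s), p ω

/-- Shannon entropy (natural logarithm) of the random variable `X`. Since
`Real.log 0 = 0`, the convention `0 · log 0 = 0` is automatic. -/
noncomputable def shannonEntropy {Ω S : Type*} [Fintype Ω] [Fintype S]
    (p : Ω → ℝ) (X : Ω → S) : ℝ :=
  -∑ s : S, probOf p X s * Real.log (probOf p X s)

/-- Conditional entropy `H(X | Y) = H(X, Y) - H(Y)`. -/
noncomputable def condEntropyRV {Ω S T : Type*} [Fintype Ω] [Fintype S] [Fintype T]
    (p : Ω → ℝ) (X : Ω → S) (Y : Ω → T) : ℝ :=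
  shannonEntropy p (fun ω => (X ω, Y ω)) - shannonEntropy p Y

/-- Mutual information `I(X; Y) = H(X) + H(Y) - H(X, Y)`. -/
noncomputable def mutualInfoRV {Ω S T : Type*} [Fintype Ω] [Fintype S] [Fintype T]
    (p : Ω → ℝ) (X : Ω → S) (Y : Ω → T) : ℝ :=
  shannonEntropy p X + shannonEntropy p Y - shannonEntropy p (fun ω => (X ω, Y ω))

/-- `X` and `Y` are stochastically independent random variables. -/
def IndepRV {Ω S T : Type*} [Fintype Ω] (p : Ω → ℝ) (X : Ω → S) (Y : Ω → T) : Prop :=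
  ∀ s t, probOf p (fun ω => (X ω, Y ω)) (s, t) = probOf p X s * probOf p Y t


set_option linter.unusedSectionVars false
set_option maxHeartbeats 1000000

namespace SecureRFCAux

open Submodule Polynomial


open Submodule Polynomial

variable {q p w : ℕ} [Fact q.Prime] [Fintype (GaloisField q p)]

local notation "F" => GaloisField q p

/-- The `m`-th Frobenius power of the vector of evaluation points. -/
noncomputable def gvec (z : Fin w → F) (m : ℕ) : Fin w → F := fun i => z i ^ q ^ m

/-- Coordinatewise Frobenius. -/
noncomputable def phiv (x : Fin w → F) : Fin w → F := fun i => x i ^ q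

lemma phiv_gvec (z : Fin w → F) (m : ℕ) : phiv (gvec z m) = gvec z (m + 1) := by
  funext i
  simp only [phiv, gvec, ← pow_mul, ← pow_succ]

lemma phiv_injective : Function.Injective (phiv (q := q) (p := p) (w := w)) := by
  intro x y h
  funext i
  exact (frobenius F q).injective (congrFun h i : (frobenius F q) (x i) = (frobenius F q) (y i))

lemma phiv_mem_span (z : Fin w → F) (s : Set ℕ) (x : Fin w → F)
    (hx : x ∈ span F (gvec z '' s)) :
    phiv x ∈ span F (gvec z '' ((· + 1) '' s)) := by
  induction hx using Submodule.span_induction with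
  | mem y hy =>
      obtain ⟨m, hm, rfl⟩ := hy
      rw [phiv_gvec]
      exact subset_span ⟨m + 1, ⟨m, hm, rfl⟩, rfl⟩
  | zero =>
      have : phiv (0 : Fin w → F) = 0 := by
        funext i; simp [phiv, zero_pow (Fact.out : q.Prime).ne_zero]
      rw [this]; exact zero_mem _
  | add a b _ _ ha hb =>
      have : phiv (a + b) = phiv a + phiv b := by
        funext i; simp [phiv, add_pow_char]
      rw [this]; exact add_mem ha hb
  | smul c a _ ha =>
      have : phiv (c • a) = c ^ q • phiv a := by
        funext i; simp [phiv, mul_pow]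
      rw [this]; exact smul_mem _ _ ha

/-- Tail spans of the Frobenius orbit. -/
noncomputable def tailSpan (z : Fin w → F) (n : ℕ) : Submodule F (Fin w → F) :=
  span F (gvec z '' Set.Ici n)

lemma tailSpan_eq (z : Fin w → F) (n : ℕ) : tailSpan z n = tailSpan z 0 := by
  induction n with
  | zero => rfl
  | succ n ih =>
      rw [← ih]
      have hle : tailSpan z (n + 1) ≤ tailSpan z n :=
        span_mono (Set.image_mono (Set.Ici_subset_Ici.mpr (Nat.le_succ n)))
      have himg : (· + 1) '' Set.Ici n = Set.Ici (n + 1) := by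
        ext m
        simp only [Set.mem_image, Set.mem_Ici]
        constructor
        · rintro ⟨a, ha, rfl⟩; omega
        · intro h; exact ⟨m - 1, by omega, by omega⟩
      have hsub : phiv '' (tailSpan z n : Set (Fin w → F)) ⊆
          (tailSpan z (n + 1) : Set (Fin w → F)) := by
        rintro _ ⟨x, hx, rfl⟩
        have := phiv_mem_span z (Set.Ici n) x hx
        rwa [himg] at this
      have hfin : (tailSpan z n : Set (Fin w → F)).Finite := Set.toFinite _
      have hcard : (tailSpan z n : Set (Fin w → F)).ncard ≤
          (tailSpan z (n + 1) : Set (Fin w → F)).ncard := by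
        calc (tailSpan z n : Set (Fin w → F)).ncard
            = (phiv '' (tailSpan z n : Set (Fin w → F))).ncard :=
              (Set.ncard_image_of_injective _ phiv_injective).symm
          _ ≤ (tailSpan z (n + 1) : Set (Fin w → F)).ncard :=
              Set.ncard_le_ncard hsub (Set.toFinite _)
      exact SetLike.ext' (Set.eq_of_subset_of_ncard_le hle hcard hfin)

lemma tailSpan_zero_eq (z : Fin w → F) : tailSpan z 0 = span F (Set.range (gvec z)) := by
  unfold tailSpan
  congr 1
  ext x
  simp only [Set.mem_image, Set.mem_Ici, Set.mem_range]
  exact ⟨fun ⟨m, _, h⟩ => ⟨m, h⟩, fun ⟨m, h⟩ => ⟨m, Nat.zero_le m, h⟩⟩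

/-- Window spans of the Frobenius orbit. -/
noncomputable def winSpan (z : Fin w → F) (k n : ℕ) : Submodule F (Fin w → F) :=
  span F (gvec z '' Set.Ico k (k + n))

lemma winSpan_le_tail (z : Fin w → F) (k n : ℕ) : winSpan z k n ≤ tailSpan z k :=
  span_mono (Set.image_mono fun _ h => h.1)

lemma winSpan_mono (z : Fin w → F) (k : ℕ) {n n' : ℕ} (h : n ≤ n') :
    winSpan z k n ≤ winSpan z k n' :=
  span_mono (Set.image_mono (Set.Ico_subset_Ico le_rfl (by omega)))

lemma winSpan_stab (z : Fin w → F) (k n : ℕ) (h : winSpan z k n = winSpan z k (n + 1)) :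
    tailSpan z k ≤ winSpan z k n := by
  have key : ∀ j : ℕ, gvec z (k + j) ∈ winSpan z k n := by
    intro j
    induction j with
    | zero =>
        rw [h]
        exact subset_span ⟨k, ⟨le_rfl, by omega⟩, by rw [Nat.add_zero]⟩
    | succ j ih =>
        have h1 : phiv (gvec z (k + j)) ∈ span F (gvec z '' ((· + 1) '' Set.Ico k (k + n))) :=
          phiv_mem_span z _ _ ih
        rw [phiv_gvec] at h1
        have h2 : ((· + 1) '' Set.Ico k (k + n)) ⊆ Set.Ico k (k + (n + 1)) := by
          rintro _ ⟨a, ha, rfl⟩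
          simp only [Set.mem_Ico] at ha ⊢
          omega
        have h3 : gvec z (k + j + 1) ∈ winSpan z k (n + 1) :=
          span_mono (Set.image_mono h2) h1
        rw [← h] at h3
        exact (by rw [Nat.add_succ]; exact h3 : gvec z (k + (j + 1)) ∈ winSpan z k n)
  rw [tailSpan, span_le]
  rintro _ ⟨m, hm, rfl⟩
  have hm' : k ≤ m := hm
  have : m = k + (m - k) := by omega
  rw [this]
  exact key _

/-- The `q^m`-power map as a `ZMod q`-linear map. -/
noncomputable def frobPowLM (q p : ℕ) [Fact q.Prime] (m : ℕ) :
    GaloisField q p →ₗ[ZMod q] GaloisField q p where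
  toFun y := y ^ q ^ m
  map_add' x y := add_pow_char_pow x y q m
  map_smul' a y := by
    simp only [RingHom.id_apply, Algebra.smul_def, mul_pow, ← map_pow, ZMod.pow_card_pow]

/-- The `q`-linearized polynomial map `y ↦ ∑ cₘ y^{q^m}` as a `ZMod q`-linear map. -/
noncomputable def qpolyLM (q p : ℕ) [Fact q.Prime] {d : ℕ} (c : Fin d → GaloisField q p) :
    GaloisField q p →ₗ[ZMod q] GaloisField q p :=
  ∑ m : Fin d, (LinearMap.lsmul (GaloisField q p) (GaloisField q p) (c m)).restrictScalars
    (ZMod q) ∘ₗ frobPowLM q p (m : ℕ)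

lemma qpolyLM_apply {d : ℕ} (c : Fin d → F) (y : F) :
    qpolyLM q p c y = ∑ m : Fin d, c m * y ^ q ^ (m : ℕ) := by
  simp [qpolyLM, frobPowLM, LinearMap.sum_apply]

/-- Lower bound: `ν ≤ finrank F (span of all Frobenius rows)`. -/
lemma nu_le_finrank (z : Fin w → F) {ν : ℕ}
    (hν : Module.finrank (ZMod q) (Submodule.span (ZMod q) (Set.range z)) = ν) :
    ν ≤ Module.finrank F (span F (Set.range (gvec z))) := by
  set S₀ := span F (Set.range (gvec z)) with hS₀
  set d := Module.finrank F S₀ with hd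
  by_contra hlt
  push_neg at hlt
  have hnli : ¬ LinearIndependent F (fun m : Fin (d + 1) =>
      (⟨gvec z m, subset_span ⟨m, rfl⟩⟩ : S₀)) := by
    intro h
    have := h.fintype_card_le_finrank
    simp only [Fintype.card_fin] at this
    omega
  obtain ⟨c, hrel, m₀, hm₀⟩ := Fintype.not_linearIndependent_iff.mp hnli
  have hrel' : ∑ m : Fin (d + 1), c m • gvec z m = 0 := by
    have := congrArg (Subtype.val) hrel
    simpa using this
  have hz : ∀ i, ∑ m : Fin (d + 1), c m * z i ^ q ^ (m : ℕ) = 0 := by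
    intro i
    have := congrFun hrel' i
    simpa [gvec] using this
  set P : Polynomial F := ∑ m : Fin (d + 1), Polynomial.C (c m) * Polynomial.X ^ q ^ (m : ℕ)
    with hP
  have hq2 : 2 ≤ q := (Fact.out : q.Prime).two_le
  have hPne : P ≠ 0 := by
    intro h0
    have hc : P.coeff (q ^ (m₀ : ℕ)) = c m₀ := by
      rw [hP, Polynomial.finset_sum_coeff, Finset.sum_eq_single m₀]
      · simp
      · intro b _ hb
        rw [Polynomial.coeff_C_mul, Polynomial.coeff_X_pow, if_neg, mul_zero]
        exact fun h => hb (Fin.ext (Nat.pow_right_injective hq2 h.symm))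
      · simp
    rw [h0] at hc
    simp at hc
    exact hm₀ hc.symm
  have hPdeg : P.natDegree ≤ q ^ d := by
    refine Polynomial.natDegree_sum_le_of_forall_le _ _ fun m _ => ?_
    exact (Polynomial.natDegree_C_mul_X_pow_le _ _).trans
      (Nat.pow_le_pow_right (by omega) (by omega))
  have heval : ∀ y : F, P.eval y = qpolyLM q p c y := by
    intro y
    rw [qpolyLM_apply, hP, Polynomial.eval_finset_sum]
    simp
  have hker : span (ZMod q) (Set.range z) ≤ LinearMap.ker (qpolyLM q p c) := by
    rw [span_le]
    rintro _ ⟨i, rfl⟩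
    rw [SetLike.mem_coe, LinearMap.mem_ker, qpolyLM_apply]
    exact hz i
  have hroot : ∀ y ∈ span (ZMod q) (Set.range z), y ∈ P.roots.toFinset := by
    intro y hy
    rw [Multiset.mem_toFinset, Polynomial.mem_roots']
    refine ⟨hPne, ?_⟩
    have : qpolyLM q p c y = 0 := hker hy
    rw [Polynomial.IsRoot, heval, this]
  set V := span (ZMod q) (Set.range z) with hV
  have hcardV : Nat.card ↥V = q ^ ν := by
    rw [Nat.card_eq_fintype_card, Module.card_eq_pow_finrank (K := ZMod q), ZMod.card, hν]
  have hsub : (V : Set F).toFinset ⊆ P.roots.toFinset := by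
    intro y hy
    rw [Set.mem_toFinset] at hy
    exact hroot y hy
  have hcard1 : (V : Set F).toFinset.card = q ^ ν := by
    rw [← Set.ncard_eq_toFinset_card', ← Nat.card_coe_set_eq]
    exact hcardV
  have : q ^ ν ≤ q ^ d := by
    calc q ^ ν = (V : Set F).toFinset.card := hcard1.symm
      _ ≤ P.roots.toFinset.card := Finset.card_le_card hsub
      _ ≤ Multiset.card P.roots := Multiset.toFinset_card_le _
      _ ≤ P.natDegree := Polynomial.card_roots' P
      _ ≤ q ^ d := hPdeg
  have := (Nat.pow_le_pow_iff_right hq2).mp this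
  omega

/-- Upper bound: `finrank F (span of all Frobenius rows) ≤ ν`. -/
lemma finrank_le_nu (z : Fin w → F) {ν : ℕ}
    (hν : Module.finrank (ZMod q) (Submodule.span (ZMod q) (Set.range z)) = ν) :
    Module.finrank F (span F (Set.range (gvec z))) ≤ ν := by
  set V := span (ZMod q) (Set.range z) with hV
  let b : Module.Basis (Fin ν) (ZMod q) V := Module.finBasisOfFinrankEq (ZMod q) V hν
  let zz : Fin w → V := fun i => ⟨z i, subset_span ⟨i, rfl⟩⟩
  let A : Fin ν → (Fin w → F) := fun t i => algebraMap (ZMod q) F (b.repr (zz i) t)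
  have key : ∀ m, gvec z m = ∑ t : Fin ν, ((b t : F) ^ q ^ m) • A t := by
    intro m
    funext i
    have hzi : z i = ∑ t : Fin ν, b.repr (zz i) t • (b t : F) := by
      have := congrArg (Subtype.val) (b.sum_repr (zz i))
      simp only [Submodule.coe_sum, Submodule.coe_smul] at this
      exact this.symm
    have h0 : gvec z m i = frobPowLM q p m (z i) := rfl
    rw [h0, hzi, map_sum]
    simp only [map_smul]
    rw [Finset.sum_apply]
    refine Finset.sum_congr rfl fun t _ => ?_
    simp only [A, Pi.smul_apply, smul_eq_mul, Algebra.smul_def, frobPowLM,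
      LinearMap.coe_mk, AddHom.coe_mk]
    ring
  have hle : span F (Set.range (gvec z)) ≤ span F (Set.range A) := by
    rw [span_le]
    rintro _ ⟨m, rfl⟩
    rw [key m]
    exact sum_mem fun t _ => smul_mem _ _ (subset_span ⟨t, rfl⟩)
  calc Module.finrank F (span F (Set.range (gvec z)))
      ≤ Module.finrank F (span F (Set.range A)) := Submodule.finrank_mono hle
    _ ≤ (Set.range A).toFinset.card := finrank_span_le_card _
    _ ≤ ν := by
        rw [Set.toFinset_range]
        exact (Finset.card_image_le).trans (by simp)

lemma range_eq_image (z : Fin w → F) (k u : ℕ) :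
    (Set.range fun j : Fin u => gvec z (k + (j : ℕ))) = gvec z '' Set.Ico k (k + u) := by
  ext x
  constructor
  · rintro ⟨j, rfl⟩
    exact ⟨k + (j : ℕ), ⟨Nat.le_add_right _ _, by omega⟩, rfl⟩
  · rintro ⟨m, hm, rfl⟩
    have hm1 : k ≤ m := hm.1
    have hm2 : m < k + u := hm.2
    refine ⟨⟨m - k, by omega⟩, ?_⟩
    have h : k + (m - k) = m := by omega
    exact congrArg (gvec z) h

/-- Main algebraic fact: the window span contains all Frobenius rows and has
`F`-dimension `ν`. -/
theorem main_alg (z : Fin w → F) (k u ν : ℕ)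
    (hν : Module.finrank (ZMod q) (Submodule.span (ZMod q) (Set.range z)) = ν) (hνu : ν ≤ u) :
    (∀ m, gvec z m ∈ span F (Set.range fun j : Fin u => gvec z (k + (j : ℕ)))) ∧
    Module.finrank F (span F (Set.range fun j : Fin u => gvec z (k + (j : ℕ)))) = ν := by
  have hW : span F (Set.range fun j : Fin u => gvec z (k + (j : ℕ))) = winSpan z k u := by
    rw [winSpan, range_eq_image]
  have hfr0 : Module.finrank F (tailSpan z 0) = ν := by
    rw [tailSpan_zero_eq]
    exact le_antisymm (finrank_le_nu z hν) (nu_le_finrank z hν)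
  have htk : tailSpan z k = tailSpan z 0 := tailSpan_eq z k
  have claim : ∀ n, winSpan z k n = tailSpan z k ∨ n ≤ Module.finrank F (winSpan z k n) := by
    intro n
    induction n with
    | zero => exact Or.inr (Nat.zero_le _)
    | succ n ih =>
        rcases ih with h | h
        · left
          refine le_antisymm (winSpan_le_tail z k (n + 1)) ?_
          rw [← h]
          exact winSpan_mono z k (Nat.le_succ n)
        · by_cases he : winSpan z k n = winSpan z k (n + 1)
          · left
            refine le_antisymm (winSpan_le_tail z k (n + 1)) ?_
            calc tailSpan z k ≤ winSpan z k n := winSpan_stab z k n he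
              _ ≤ winSpan z k (n + 1) := le_of_eq he
          · right
            have hlt : winSpan z k n < winSpan z k (n + 1) :=
              lt_of_le_of_ne (winSpan_mono z k (Nat.le_succ n)) he
            have := Submodule.finrank_lt_finrank_of_lt hlt
            omega
  have hwin : winSpan z k u = tailSpan z k := by
    rcases claim u with h | h
    · exact h
    · have h1 : winSpan z k u ≤ tailSpan z k := winSpan_le_tail z k u
      have h2 : Module.finrank F (winSpan z k u) ≤ Module.finrank F (tailSpan z k) :=
        Submodule.finrank_mono h1
      rw [htk, hfr0] at h2
      refine Submodule.eq_of_le_of_finrank_eq h1 ?_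
      rw [htk, hfr0]
      omega
  constructor
  · intro m
    rw [hW, hwin, htk, tailSpan_zero_eq]
    exact subset_span ⟨m, rfl⟩
  · rw [hW, hwin, htk, hfr0]



lemma filter_card_irrel {α : Type*} [Fintype α] (P : α → Prop) (h1 h2 : DecidablePred P) :
    (@Finset.filter α P h1 Finset.univ).card = (@Finset.filter α P h2 Finset.univ).card := by
  congr 1
  apply Finset.ext
  intro a
  rw [@Finset.mem_filter _ _ h1, @Finset.mem_filter _ _ h2]

lemma probOf_add_decomp {Ω S T U : Type*} [Fintype Ω] [AddCommGroup S] [Fintype T] [Fintype U]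
    (pr : Ω → ℝ) (E : Ω → S) (M : Ω → T) (R : Ω → U)
    (cf : T → S) (Lf : U → S)
    (hEf : ∀ ω, E ω = cf (M ω) + Lf (R ω))
    (hMR : IndepRV pr M R)
    (cF : ℝ)
    (hRu : ∀ v, probOf pr R v = 1 / cF)
    (Nf : S → ℕ)
    (hNfc : ∀ y, (Finset.univ.filter fun r : U => Lf r = y).card = Nf y)
    (e : S) :
    probOf pr E e = ∑ m : T, ((Nf (e - cf m) : ℕ) : ℝ) * (probOf pr M m / cF) := by
  have step1 : probOf pr E e = ∑ v : T × U,
      (if cf v.1 + Lf v.2 = e then probOf pr (fun ω => (M ω, R ω)) v else 0) := by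
    rw [probOf, Finset.sum_filter,
      ← Finset.sum_fiberwise Finset.univ (fun ω => (M ω, R ω))
        (fun ω => if E ω = e then pr ω else 0)]
    refine Finset.sum_congr rfl fun v _ => ?_
    by_cases hv : cf v.1 + Lf v.2 = e
    · rw [if_pos hv, probOf]
      refine Finset.sum_congr ?_ ?_
      · congr
      intro ω hω
      simp only [Finset.mem_filter] at hω
      have hM : M ω = v.1 := congrArg Prod.fst hω.2
      have hRω : R ω = v.2 := congrArg Prod.snd hω.2
      rw [if_pos (by rw [hEf ω, hM, hRω]; exact hv)]
    · rw [if_neg hv]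
      refine Finset.sum_eq_zero fun ω hω => ?_
      simp only [Finset.mem_filter] at hω
      have hM : M ω = v.1 := congrArg Prod.fst hω.2
      have hRω : R ω = v.2 := congrArg Prod.snd hω.2
      rw [if_neg (by rw [hEf ω, hM, hRω]; exact hv)]
  rw [step1, Fintype.sum_prod_type]
  refine Finset.sum_congr rfl fun m _ => ?_
  have hcond : ∀ r : U, (cf m + Lf r = e) ↔ (Lf r = e - cf m) := by
    intro r
    constructor
    · intro h; rw [← h]; abel
    · intro h; rw [h]; abel
  calc ∑ r : U, (if cf m + Lf r = e then probOf pr (fun ω => (M ω, R ω)) (m, r) else 0)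
      = ∑ r : U, (if Lf r = e - cf m then probOf pr M m / cF else 0) := by
        refine Finset.sum_congr rfl fun r _ => ?_
        rw [hMR m r, hRu r]
        by_cases hr : Lf r = e - cf m
        · rw [if_pos ((hcond r).mpr hr), if_pos hr]
          ring
        · rw [if_neg (fun hh => hr ((hcond r).mp hh)), if_neg hr]
    _ = ∑ r ∈ Finset.univ.filter (fun r : U => Lf r = e - cf m), probOf pr M m / cF :=
        (Finset.sum_filter _ _).symm
    _ = ((Nf (e - cf m) : ℕ) : ℝ) * (probOf pr M m / cF) := by
        rw [Finset.sum_const, nsmul_eq_mul, hNfc]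


lemma sum_probOf {Ω S : Type*} [Fintype Ω] [Fintype S] (pr : Ω → ℝ) (X : Ω → S) :
    ∑ s : S, probOf pr X s = ∑ ω : Ω, pr ω := by
  simp only [probOf]
  exact Finset.sum_fiberwise _ _ _


end SecureRFCAux

open SecureRFCAux Submodule

/-- with `F = GF(q^p)`, evaluation points `z_1, …, z_w` whose
`GF(q)`-linear span has dimension `ν ≤ u`, message `M` with values in `F^k`,
padding `R` uniform on `F^u` independent of `M`, and
`E_i = ∑_{j=1}^{k} M_j z_i^{q^{j-1}} + ∑_{j=1}^{u} R_j z_i^{q^{k+j-1}}`,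
the entropy of the eavesdropped vector is `H(E) = ν · p · log q`. -/
theorem secure_RFC_eavesdropped_entropy
    (q p k u w ν : ℕ) [Fact q.Prime] (hp : 0 < p)
    [Fintype (GaloisField q p)]
    {Ω : Type*} [Fintype Ω]
    (pr : Ω → ℝ) (hpr : ∀ ω, 0 ≤ pr ω) (hsum : ∑ ω : Ω, pr ω = 1)
    (z : Fin w → GaloisField q p)
    (hν : Module.finrank (ZMod q) (Submodule.span (ZMod q) (Set.range z)) = ν)
    (hνu : ν ≤ u)
    (M : Ω → Fin k → GaloisField q p)
    (R : Ω → Fin u → GaloisField q p)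
    (hMR : IndepRV pr M R)
    (hR : ∀ v : Fin u → GaloisField q p,
        probOf pr R v = 1 / (Fintype.card (Fin u → GaloisField q p) : ℝ))
    (E : Ω → Fin w → GaloisField q p)
    (hE : ∀ ω (i : Fin w),
        E ω i = ∑ j : Fin k, M ω j * z i ^ q ^ (j : ℕ)
              + ∑ j : Fin u, R ω j * z i ^ q ^ (k + (j : ℕ))) :
    shannonEntropy pr E = (ν : ℝ) * (p : ℝ) * Real.log (q : ℝ) := by
  obtain ⟨hWmem, hWrank⟩ := main_alg z k u ν hν hνu
  set W : Submodule (GaloisField q p) (Fin w → GaloisField q p) :=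
    span (GaloisField q p) (Set.range fun j : Fin u => gvec z (k + (j : ℕ))) with hWdef
  set cf : (Fin k → GaloisField q p) → (Fin w → GaloisField q p) :=
    fun m => ∑ j : Fin k, m j • gvec z (j : ℕ) with hcf
  set Lf : (Fin u → GaloisField q p) → (Fin w → GaloisField q p) :=
    fun r => ∑ j : Fin u, r j • gvec z (k + (j : ℕ)) with hLf
  have hEfun : ∀ ω, E ω = cf (M ω) + Lf (R ω) := by
    intro ω
    funext i
    rw [hE ω i]
    have h1 : (cf (M ω) + Lf (R ω)) i =
        (∑ j : Fin k, M ω j • gvec z (j : ℕ) i) + ∑ j : Fin u, R ω j • gvec z (k + (j : ℕ)) i := by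
      simp [hcf, hLf, Finset.sum_apply]
    rw [h1]
    simp [gvec, smul_eq_mul]
  have hcf_mem : ∀ m, cf m ∈ W := fun m => sum_mem fun j _ => smul_mem _ _ (hWmem j)
  have hLf_mem : ∀ r, Lf r ∈ W := fun r => sum_mem fun j _ => smul_mem _ _ (hWmem (k + j))
  have hLf_add : ∀ a b, Lf (a + b) = Lf a + Lf b := by
    intro a b
    simp [hLf, add_smul, Finset.sum_add_distrib]
  have hLf_sub : ∀ a b, Lf (a - b) = Lf a - Lf b := by
    intro a b
    simp [hLf, sub_smul, Finset.sum_sub_distrib]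
  have hLf_surj : ∀ y ∈ W, ∃ r, Lf r = y := by
    intro y hy
    obtain ⟨c, hc⟩ := (mem_span_range_iff_exists_fun (GaloisField q p)).mp hy
    exact ⟨c, hc⟩
  -- fiber counts of Lf
  set Nf : (Fin w → GaloisField q p) → ℕ :=
    fun y => (Finset.univ.filter fun r : Fin u → GaloisField q p => Lf r = y).card with hNf
  have hN0 : ∀ y, y ∉ W → Nf y = 0 := by
    intro y hy
    rw [hNf, Finset.card_eq_zero, Finset.filter_eq_empty_iff]
    intro r _ hr
    exact hy (hr ▸ hLf_mem r)
  have hNconst : ∀ y ∈ W, ∀ y' ∈ W, Nf y = Nf y' := by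
    intro y hy y' hy'
    obtain ⟨r₀, hr₀⟩ := hLf_surj (y' - y) (sub_mem hy' hy)
    refine Finset.card_bij' (fun r _ => r + r₀) (fun r _ => r - r₀) ?_ ?_ ?_ ?_
    · intro r hr
      rw [Finset.mem_filter] at hr ⊢
      refine ⟨Finset.mem_univ _, ?_⟩
      rw [hLf_add, hr.2, hr₀]
      abel
    · intro r hr
      rw [Finset.mem_filter] at hr ⊢
      refine ⟨Finset.mem_univ _, ?_⟩
      rw [hLf_sub, hr.2, hr₀]
      abel
    · intro r _; exact add_sub_cancel_right r r₀
    · intro r _; exact sub_add_cancel r r₀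
  set Wfin : Finset (Fin w → GaloisField q p) :=
    (W : Set (Fin w → GaloisField q p)).toFinset with hWfin
  have hmem_Wfin : ∀ y : Fin w → GaloisField q p, y ∈ Wfin ↔ y ∈ W := by
    intro y; rw [hWfin, Set.mem_toFinset]; rfl
  have htot : ∀ y ∈ W, Wfin.card * Nf y = Fintype.card (Fin u → GaloisField q p) := by
    intro y hy
    have h1 : (Finset.univ : Finset (Fin u → GaloisField q p)).card =
        ∑ y' ∈ Wfin, (Finset.univ.filter fun r : Fin u → GaloisField q p => Lf r = y').card :=
      Finset.card_eq_sum_card_fiberwise fun r _ => (hmem_Wfin _).mpr (hLf_mem r)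
    rw [Finset.card_univ] at h1
    have h2 : ∀ y' ∈ Wfin,
        (Finset.univ.filter fun r : Fin u → GaloisField q p => Lf r = y').card = Nf y :=
      fun y' hy' => hNconst y' ((hmem_Wfin _).mp hy') y hy
    rw [Finset.sum_congr rfl h2, Finset.sum_const, smul_eq_mul] at h1
    omega
  have hWfin_pos : 0 < Wfin.card := by
    rw [Finset.card_pos]
    exact ⟨0, (hmem_Wfin _).mpr (zero_mem W)⟩
  have hcFpos : 0 < Fintype.card (Fin u → GaloisField q p) := Fintype.card_pos
  have hW0 : (Wfin.card : ℝ) ≠ 0 := Nat.cast_ne_zero.mpr hWfin_pos.ne'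
  have hc0 : (Fintype.card (Fin u → GaloisField q p) : ℝ) ≠ 0 := Nat.cast_ne_zero.mpr hcFpos.ne'
  -- the distribution of E
  have hprobE : ∀ e, probOf pr E e = if e ∈ W then 1 / (Wfin.card : ℝ) else 0 := by
    intro e
    have step := probOf_add_decomp pr E M R cf Lf hEfun hMR
      (Fintype.card (Fin u → GaloisField q p) : ℝ) hR Nf
      (fun y => by
        show _ = (Finset.univ.filter fun r : Fin u → GaloisField q p => Lf r = y).card
        exact filter_card_irrel _ _ _) e
    rw [step]
    by_cases he : e ∈ W
    · rw [if_pos he]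
      have hterm : ∀ m : Fin k → GaloisField q p,
          ((Nf (e - cf m) : ℕ) : ℝ) *
            (probOf pr M m / (Fintype.card (Fin u → GaloisField q p) : ℝ)) =
          probOf pr M m * (1 / (Wfin.card : ℝ)) := by
        intro m
        have hmem : e - cf m ∈ W := sub_mem he (hcf_mem m)
        have h1 : Wfin.card * Nf (e - cf m) = Fintype.card (Fin u → GaloisField q p) :=
          htot _ hmem
        have h2 : (Wfin.card : ℝ) * (Nf (e - cf m) : ℝ) =
            (Fintype.card (Fin u → GaloisField q p) : ℝ) := by
          exact_mod_cast congrArg (Nat.cast (R := ℝ)) h1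
        have h4 : ((Nf (e - cf m) : ℝ)) / (Fintype.card (Fin u → GaloisField q p) : ℝ)
            = 1 / (Wfin.card : ℝ) := by
          rw [div_eq_div_iff hc0 hW0]
          linarith [h2]
        calc ((Nf (e - cf m) : ℕ) : ℝ) *
              (probOf pr M m / (Fintype.card (Fin u → GaloisField q p) : ℝ))
            = probOf pr M m * ((Nf (e - cf m) : ℝ) /
                (Fintype.card (Fin u → GaloisField q p) : ℝ)) := by
              ring
          _ = probOf pr M m * (1 / (Wfin.card : ℝ)) := by rw [h4]
      refine Eq.trans (Finset.sum_congr rfl fun m _ => hterm m) ?_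
      rw [← Finset.sum_mul]
      have hsumM : ∑ m : Fin k → GaloisField q p, probOf pr M m = 1 := by
        rw [sum_probOf pr M, hsum]
      rw [hsumM, one_mul]
    · rw [if_neg he]
      refine Finset.sum_eq_zero fun m _ => ?_
      have hnm : e - cf m ∉ W := by
        intro hmem
        exact he (by simpa using add_mem hmem (hcf_mem m))
      rw [hN0 _ hnm]
      simp
  -- cardinality of W
  have hcardW : Wfin.card = q ^ (p * ν) := by
    have h1 : Fintype.card ↥W =
        Fintype.card (GaloisField q p) ^ Module.finrank (GaloisField q p) W :=
      Module.card_eq_pow_finrank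
    have h2 : Fintype.card (GaloisField q p) = q ^ p := by
      rw [← Nat.card_eq_fintype_card]
      exact GaloisField.card (p := q) (n := p) hp.ne'
    have h3 : Wfin.card = Nat.card ↥W := by
      rw [hWfin, ← Set.ncard_eq_toFinset_card', ← Nat.card_coe_set_eq]
      rfl
    rw [h3, Nat.card_eq_fintype_card, h1, h2, hWrank, ← pow_mul]
  -- final entropy computation
  rw [shannonEntropy]
  have hterm : ∀ e : Fin w → GaloisField q p, probOf pr E e * Real.log (probOf pr E e) =
      (if e ∈ W then (1 / (Wfin.card : ℝ)) * Real.log (1 / (Wfin.card : ℝ)) else 0) := by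
    intro e
    rw [hprobE e]
    split_ifs
    · rfl
    · simp
  rw [Finset.sum_congr rfl fun e _ => hterm e]
  have hfilter : Finset.univ.filter (fun e : Fin w → GaloisField q p => e ∈ W) = Wfin := by
    ext e
    simp [hmem_Wfin]
  rw [Finset.sum_ite, Finset.sum_const, Finset.sum_const_zero, add_zero, hfilter,
    nsmul_eq_mul]
  rw [one_div, Real.log_inv]
  have hfin : -((Wfin.card : ℝ) * ((Wfin.card : ℝ)⁻¹ * -Real.log (Wfin.card : ℝ))) =
      Real.log (Wfin.card : ℝ) := by
    field_simp
  rw [hfin, hcardW]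
  push_cast
  rw [Real.log_pow]
  push_cast
  ring
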